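/- Let κ : [0,1] → (0,∞) be continuous and integrable, γ > 0, M̄ ≥ 1, B(0) ∈ ℝ with M̄·B(0) + 1 < 0, and suppose (B, A, Σ) solve the coupled system B'(t) = 2κ(t)(M̄B(t)+1)/(γ(A(t)+M̄+1)), A'(t) = -(B'(t))²Σ(t)(A(t)+1) with A(0) ∈ (-1,0], Σ'(t) = -(B'(t))²Σ(t)² with Σ(0) ≥ 0, on [0,1]. Then B(t) < 0 and B'(t) < 0 for all t ∈ [0,1]. -/

import Mathlib

open Set Filter
open scoped Topology

/-- With `κ` continuous positive on `[0,1]`, `γ > 0`, `M̄ ≥ 1`,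
`M̄·B(0)+1 < 0`, and `(B,A,Σ)` solving the coupled price-impact system on `[0,1]`
with `A 0 ∈ (-1,0]` and `Σ 0 ≥ 0`, we have `B t < 0` and `B' t < 0` on `[0,1]`. -/
theorem stmt6 (κ B A Sg : ℝ → ℝ) (γ : ℝ) (hγ : 0 < γ) (Mb : ℕ) (hMb : 1 ≤ Mb)
    (hκ : ContinuousOn κ (Icc (0:ℝ) 1)) (hκpos : ∀ t ∈ Icc (0:ℝ) 1, 0 < κ t)
    (hB0 : (Mb : ℝ) * B 0 + 1 < 0)
    (hA0 : A 0 ∈ Ioc (-1 : ℝ) 0) (hSg0 : 0 ≤ Sg 0)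
    (hB : ∀ t ∈ Icc (0:ℝ) 1,
      HasDerivAt B (2 * κ t * ((Mb : ℝ) * B t + 1) / (γ * (A t + (Mb : ℝ) + 1))) t)
    (hA : ∀ t ∈ Icc (0:ℝ) 1,
      HasDerivAt A (-(deriv B t) ^ 2 * Sg t * (A t + 1)) t)
    (hSg : ∀ t ∈ Icc (0:ℝ) 1,
      HasDerivAt Sg (-(deriv B t) ^ 2 * (Sg t) ^ 2) t) :
    ∀ t ∈ Icc (0:ℝ) 1, B t < 0 ∧ deriv B t < 0 := by
  have hM1 : (1:ℝ) ≤ (Mb:ℝ) := by exact_mod_cast hMb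
  have hMpos : (0:ℝ) < (Mb:ℝ) := lt_of_lt_of_le one_pos hM1
  set P : ℝ → Prop := fun t => -1 < A t ∧ (Mb:ℝ) * B t + 1 < 0 with hPdef
  have dB : ∀ t ∈ Icc (0:ℝ) 1, deriv B t
      = 2 * κ t * ((Mb:ℝ) * B t + 1) / (γ * (A t + (Mb:ℝ) + 1)) :=
    fun t ht => (hB t ht).deriv
  have contB : ContinuousOn B (Icc (0:ℝ) 1) :=
    fun t ht => (hB t ht).continuousAt.continuousWithinAt
  have contA : ContinuousOn A (Icc (0:ℝ) 1) :=
    fun t ht => (hA t ht).continuousAt.continuousWithinAt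
  have contS : ContinuousOn Sg (Icc (0:ℝ) 1) :=
    fun t ht => (hSg t ht).continuousAt.continuousWithinAt
  have hP0 : P 0 := ⟨hA0.1, hB0⟩
  -- Key continuation lemma
  have key : ∀ T, T ∈ Ioc (0:ℝ) 1 → (∀ s ∈ Ico (0:ℝ) T, P s) → P T := by
    intro T hT hPs
    obtain ⟨hT0, hT1⟩ := hT
    have hTmem : T ∈ Icc (0:ℝ) 1 := ⟨hT0.le, hT1⟩
    have hsub : Icc (0:ℝ) T ⊆ Icc (0:ℝ) 1 := Icc_subset_Icc le_rfl hT1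
    have hevent : ∀ᶠ s in 𝓝[<] T, s ∈ Ico (0:ℝ) T := by
      filter_upwards [Ioo_mem_nhdsLT_of_mem (show T ∈ Ioc (0:ℝ) T from ⟨hT0, le_rfl⟩)] with s hs
      exact ⟨hs.1.le, hs.2⟩
    have hAweak : -1 ≤ A T := by
      have htd : Filter.Tendsto A (𝓝[<] T) (𝓝 (A T)) :=
        (hA T hTmem).continuousAt.continuousWithinAt.tendsto
      exact ge_of_tendsto htd (hevent.mono fun s hs => (hPs s hs).1.le)
    have hAs : ∀ s ∈ Icc (0:ℝ) T, -1 ≤ A s := by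
      intro s hs
      rcases lt_or_eq_of_le hs.2 with h | h
      · exact (hPs s ⟨hs.1, h⟩).1.le
      · rw [h]; exact hAweak
    have hden : ∀ s ∈ Icc (0:ℝ) T, 0 < γ * (A s + (Mb:ℝ) + 1) := by
      intro s hs
      have := hAs s hs
      nlinarith
    -- f T < 0 via antitonicity
    have hfT : (Mb:ℝ) * B T + 1 < 0 := by
      have hanti : AntitoneOn (fun t => (Mb:ℝ) * B t + 1) (Icc 0 T) := by
        apply antitoneOn_of_deriv_nonpos (convex_Icc 0 T)
        · exact (continuousOn_const.mul (contB.mono hsub)).add continuousOn_const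
        · intro s hs
          rw [interior_Icc] at hs
          exact (((hB s (hsub ⟨hs.1.le, hs.2.le⟩)).const_mul
            ((Mb:ℝ))).add_const 1).differentiableAt.differentiableWithinAt
        · intro s hs
          rw [interior_Icc] at hs
          have hs' : s ∈ Icc (0:ℝ) T := ⟨hs.1.le, hs.2.le⟩
          have hd := (((hB s (hsub hs')).const_mul ((Mb:ℝ))).add_const 1).deriv
          rw [hd]
          have hfs : (Mb:ℝ) * B s + 1 < 0 := (hPs s ⟨hs.1.le, hs.2⟩).2
          have hκs : 0 < κ s := hκpos s (hsub hs')
          have hq : 2 * κ s * ((Mb:ℝ) * B s + 1) / (γ * (A s + (Mb:ℝ) + 1)) < 0 :=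
            div_neg_of_neg_of_pos (by nlinarith) (hden s hs')
          nlinarith
      have := hanti (show (0:ℝ) ∈ Icc (0:ℝ) T from ⟨le_rfl, hT0.le⟩)
        (show T ∈ Icc (0:ℝ) T from ⟨hT0.le, le_rfl⟩) hT0.le
      simpa using lt_of_le_of_lt this hB0
    -- A T > -1 via Grönwall (time reversed)
    have hcd : ContinuousOn (deriv B) (Icc (0:ℝ) T) := by
      have hform : ContinuousOn
          (fun t => 2 * κ t * ((Mb:ℝ) * B t + 1) / (γ * (A t + (Mb:ℝ) + 1)))
          (Icc (0:ℝ) T) := by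
        apply ContinuousOn.div
        · exact (continuousOn_const.mul (hκ.mono hsub)).mul
            ((continuousOn_const.mul (contB.mono hsub)).add continuousOn_const)
        · exact continuousOn_const.mul
            (((contA.mono hsub).add continuousOn_const).add continuousOn_const)
        · exact fun t ht => ne_of_gt (hden t ht)
      exact hform.congr (fun t ht => dB t (hsub ht))
    have hc : ContinuousOn (fun s => -(deriv B s) ^ 2 * Sg s) (Icc (0:ℝ) T) :=
      ((hcd.pow 2).neg).mul (contS.mono hsub)
    obtain ⟨K, hK⟩ := isCompact_Icc.exists_bound_of_continuousOn hc
    have hh' : ∀ s ∈ Ico (0:ℝ) T, HasDerivAt (fun u => A (T - u) + 1)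
        ((-(deriv B (T - s)) ^ 2 * Sg (T - s) * (A (T - s) + 1)) * (-1)) s := by
      intro s hs
      have hmem : T - s ∈ Icc (0:ℝ) 1 := ⟨by linarith [hs.2], by linarith [hs.1]⟩
      have hinner : HasDerivAt (fun u : ℝ => T - u) (-1) s := by
        simpa using (hasDerivAt_id s).const_sub T
      exact ((hA (T - s) hmem).comp s hinner).add_const 1
    have hhcont : ContinuousOn (fun u => A (T - u) + 1) (Icc (0:ℝ) T) := by
      apply ContinuousOn.add _ continuousOn_const
      apply (contA.mono hsub).comp (continuousOn_const.sub continuousOn_id)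
      intro u hu
      refine ⟨?_, ?_⟩ <;> simp only [Pi.sub_apply, id_eq] <;> [linarith [hu.2]; linarith [hu.1]]
    have hgron := norm_le_gronwallBound_of_norm_deriv_right_le (K := K) (ε := 0) hhcont
      (fun s hs => (hh' s hs).hasDerivWithinAt)
      (le_refl ‖A (T - 0) + 1‖)
      (fun s hs => by
        have hmem' : T - s ∈ Icc (0:ℝ) T := ⟨by linarith [hs.2], by linarith [hs.1]⟩
        have h1 : ‖-(deriv B (T - s)) ^ 2 * Sg (T - s)‖ ≤ K := hK _ hmem'
        have h2 : (0:ℝ) ≤ ‖A (T - s) + 1‖ := norm_nonneg _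
        have heq : ‖(-(deriv B (T - s)) ^ 2 * Sg (T - s) * (A (T - s) + 1)) * (-1)‖
            = ‖-(deriv B (T - s)) ^ 2 * Sg (T - s)‖ * ‖A (T - s) + 1‖ := by
          simp [norm_mul]
        rw [heq]
        have := mul_le_mul_of_nonneg_right h1 h2
        linarith)
      T ⟨hT0.le, le_rfl⟩
    rw [sub_self, sub_zero, gronwallBound_ε0] at hgron
    have hA0pos : 0 < A 0 + 1 := by linarith [hA0.1]
    have hATne : A T + 1 ≠ 0 := by
      intro hz
      rw [hz] at hgron
      simp at hgron
      have : 0 < ‖A 0 + 1‖ := by rw [Real.norm_eq_abs, abs_of_pos hA0pos]; exact hA0pos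
      linarith
    have hAT : -1 < A T := lt_of_le_of_ne hAweak (fun h => hATne (by linarith [h]))
    exact ⟨hAT, hfT⟩
  -- The supremum argument
  set S := {t : ℝ | t ∈ Icc (0:ℝ) 1 ∧ ∀ s ∈ Icc (0:ℝ) t, P s} with hSdef
  have h0S : (0:ℝ) ∈ S := by
    refine ⟨left_mem_Icc.2 zero_le_one, fun s hs => ?_⟩
    have : s = 0 := le_antisymm hs.2 hs.1
    rw [this]; exact hP0
  have hbdd : BddAbove S := ⟨1, fun t ht => ht.1.2⟩
  set T := sSup S with hTdef
  have hT0 : 0 ≤ T := le_csSup hbdd h0S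
  have hT1 : T ≤ 1 := csSup_le ⟨0, h0S⟩ (fun t ht => ht.1.2)
  have hbelow : ∀ s ∈ Ico (0:ℝ) T, P s := by
    intro s hs
    obtain ⟨t, htS, hst⟩ := exists_lt_of_lt_csSup ⟨0, h0S⟩ hs.2
    exact htS.2 s ⟨hs.1, hst.le⟩
  have hPT : P T := by
    rcases eq_or_lt_of_le hT0 with h | h
    · rw [← h]; exact hP0
    · exact key T ⟨h, hT1⟩ hbelow
  have hall : ∀ s ∈ Icc (0:ℝ) T, P s := by
    intro s hs
    rcases lt_or_eq_of_le hs.2 with h | h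
    · exact hbelow s ⟨hs.1, h⟩
    · rw [h]; exact hPT
  have hTeq : T = 1 := by
    by_contra hne
    have hTlt : T < 1 := lt_of_le_of_ne hT1 hne
    have hTmem : T ∈ Icc (0:ℝ) 1 := ⟨hT0, hT1⟩
    have h1 : ∀ᶠ t in 𝓝 T, -1 < A t :=
      (hA T hTmem).continuousAt.eventually (eventually_gt_nhds hPT.1)
    have hcf : ContinuousAt (fun t => (Mb:ℝ) * B t + 1) T :=
      (continuousAt_const.mul (hB T hTmem).continuousAt).add continuousAt_const
    have h2 : ∀ᶠ t in 𝓝 T, (Mb:ℝ) * B t + 1 < 0 :=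
      hcf.eventually (eventually_lt_nhds hPT.2)
    obtain ⟨ε, hε, hball⟩ := Metric.eventually_nhds_iff.1 (h1.and h2)
    set t' := min (T + ε / 2) 1 with ht'def
    have ht'T : T < t' := lt_min (by linarith) hTlt
    have ht'1 : t' ≤ 1 := min_le_right _ _
    have ht'S : t' ∈ S := by
      refine ⟨⟨by linarith, ht'1⟩, fun s hs => ?_⟩
      rcases le_or_gt s T with h | h
      · exact hall s ⟨hs.1, h⟩
      · have hsd : dist s T < ε := by
          rw [Real.dist_eq, abs_of_pos (by linarith)]
          have : s ≤ T + ε / 2 := le_trans hs.2 (min_le_left _ _)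
          linarith
        exact hball hsd
    have := le_csSup hbdd ht'S
    linarith
  rw [hTeq] at hall
  intro t ht
  have hPt : P t := hall t ht
  refine ⟨by nlinarith [hPt.2], ?_⟩
  rw [dB t ht]
  apply div_neg_of_neg_of_pos
  · have := hκpos t ht; nlinarith [hPt.2]
  · nlinarith [hPt.1]
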